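/- arXiv:1311.5510 — 5 statements merged into one kernel-verified Lean document; each statement's English description precedes it below -/
import Mathlib

section
/- Every strongly connected directed multigraph $\Gamma$ with at least two vertices, in which every non-distinguished vertex has in-degree at least 2 and out-degree at least 2, contains a redundant edge, i.e., an edge whose removal leaves the graph strongly connected. -/
/-- A directed multigraph on vertex type `V` with edge type `E`. -/
structure Multidigraph (V E : Type*) where
  src : E → V
  tgt : E → V

/-- Reachability in `G` using only edges in the set `S`. -/
def Multidigraph.Reach {V E : Type*} (G : Multidigraph V E) (S : Set E) (u v : V) : Prop :=
  Relation.ReflTransGen (fun a b => ∃ e ∈ S, G.src e = a ∧ G.tgt e = b) u v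

/-- Strong connectivity of the subgraph of `G` with edge set `S`. -/
def Multidigraph.StronglyConnectedOn {V E : Type*} (G : Multidigraph V E) (S : Set E) : Prop :=
  ∀ u v : V, G.Reach S u v

def Multidigraph.indeg {V E : Type*} [Fintype E] [DecidableEq V]
    (G : Multidigraph V E) (v : V) : ℕ :=
  (Finset.univ.filter (fun e => G.tgt e = v)).card

def Multidigraph.outdeg {V E : Type*} [Fintype E] [DecidableEq V]
    (G : Multidigraph V E) (v : V) : ℕ :=
  (Finset.univ.filter (fun e => G.src e = v)).card

namespace RedundantAux

variable {V E : Type*}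

/-- There is a path of length `n` from `v` to `b`. -/
def reachN (G : Multidigraph V E) (b : V) : ℕ → V → Prop
  | 0, v => v = b
  | n+1, v => ∃ e, G.src e = v ∧ reachN G b n (G.tgt e)

/-- There is a path of length `n` from `b` to `v`. -/
def coreachN (G : Multidigraph V E) (b : V) : ℕ → V → Prop
  | 0, v => v = b
  | n+1, v => ∃ e, G.tgt e = v ∧ coreachN G b n (G.src e)

lemma exists_reachN (G : Multidigraph V E) (b : V) {v : V}
    (h : G.Reach Set.univ v b) : ∃ n, reachN G b n v := by
  induction h using Relation.ReflTransGen.head_induction_on with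
  | refl => exact ⟨0, rfl⟩
  | head hstep _ ih =>
    obtain ⟨e, -, he1, he2⟩ := hstep
    obtain ⟨n, hn⟩ := ih
    exact ⟨n + 1, e, he1, by rw [he2]; exact hn⟩

lemma exists_coreachN (G : Multidigraph V E) (b : V) {v : V}
    (h : G.Reach Set.univ b v) : ∃ n, coreachN G b n v := by
  induction h with
  | refl => exact ⟨0, rfl⟩
  | tail _ hstep ih =>
    obtain ⟨e, -, he1, he2⟩ := hstep
    obtain ⟨n, hn⟩ := ih
    exact ⟨n + 1, e, he2, by rw [he1]; exact hn⟩

end RedundantAux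

open RedundantAux Finset in
/-- Every strongly connected pointed multidigraph with at least two vertices, all of whose
non-distinguished vertices have in- and out-degree at least 2, has a redundant edge. -/
theorem exists_redundant_edge {V E : Type*} [Fintype V] [Fintype E] [DecidableEq V]
    (G : Multidigraph V E) (b : V)
    (hV : 2 ≤ Fintype.card V)
    (hstable : ∀ v : V, v ≠ b → 2 ≤ G.indeg v ∧ 2 ≤ G.outdeg v)
    (hsc : G.StronglyConnectedOn Set.univ) :
    ∃ e : E, G.StronglyConnectedOn {e' | e' ≠ e} := by
  classical
  -- there is a vertex other than `b`
  obtain ⟨v0, hv0⟩ : ∃ v : V, v ≠ b := Fintype.exists_ne_of_one_lt_card hV b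
  -- there is an edge out of `b`
  obtain ⟨e0, he0⟩ : ∃ e : E, G.src e = b := by
    rcases (hsc b v0).cases_head with h | ⟨c, ⟨e, -, he1, -⟩, -⟩
    · exact absurd h.symm hv0
    · exact ⟨e, he1⟩
  have hre : ∀ v, ∃ n, reachN G b n v := fun v => exists_reachN G b (hsc v b)
  have hco : ∀ v, ∃ n, coreachN G b n v := fun v => exists_coreachN G b (hsc b v)
  set d : V → ℕ := fun v => Nat.find (hre v) with hd_def
  set c : V → ℕ := fun v => Nat.find (hco v) with hc_def
  -- choose, for each `v ≠ b`, an edge starting at `v` that decreases `d`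
  have hfex : ∀ v : V, ∃ e : E, v ≠ b → G.src e = v ∧ d (G.tgt e) < d v := by
    intro v
    by_cases hv : v = b
    · exact ⟨e0, fun h => absurd hv h⟩
    have hspec : reachN G b (d v) v := Nat.find_spec (hre v)
    have hd0 : d v ≠ 0 := by
      intro h0
      rw [h0] at hspec
      exact hv hspec
    obtain ⟨m, hm⟩ := Nat.exists_eq_succ_of_ne_zero hd0
    rw [hm] at hspec
    obtain ⟨e, he1, he2⟩ := hspec
    refine ⟨e, fun _ => ⟨he1, ?_⟩⟩
    have h3 : d (G.tgt e) ≤ m := Nat.find_min' (hre (G.tgt e)) he2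
    omega
  -- choose, for each `v ≠ b`, an edge ending at `v` that decreases `c`
  have hgex : ∀ v : V, ∃ e : E, v ≠ b → G.tgt e = v ∧ c (G.src e) < c v := by
    intro v
    by_cases hv : v = b
    · exact ⟨e0, fun h => absurd hv h⟩
    have hspec : coreachN G b (c v) v := Nat.find_spec (hco v)
    have hc0 : c v ≠ 0 := by
      intro h0
      rw [h0] at hspec
      exact hv hspec
    obtain ⟨m, hm⟩ := Nat.exists_eq_succ_of_ne_zero hc0
    rw [hm] at hspec
    obtain ⟨e, he1, he2⟩ := hspec
    refine ⟨e, fun _ => ⟨he1, ?_⟩⟩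
    have h3 : c (G.src e) ≤ m := Nat.find_min' (hco (G.src e)) he2
    omega
  choose f hf using hfex
  choose g hg using hgex
  -- the branching edge set
  set SS : Finset E := (univ.erase b).image f ∪ (univ.erase b).image g with hSS_def
  -- everyone reaches `b` using `SS`
  have hto : ∀ n, ∀ v : V, d v ≤ n → G.Reach (↑SS) v b := by
    intro n
    induction n with
    | zero =>
      intro v hv
      have h0 : d v = 0 := Nat.le_zero.mp hv
      have hspec : reachN G b (d v) v := Nat.find_spec (hre v)
      rw [h0] at hspec
      rw [hspec]; exact Relation.ReflTransGen.refl
    | succ n ih =>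
      intro v hv
      by_cases hb : v = b
      · rw [hb]; exact Relation.ReflTransGen.refl
      obtain ⟨h1, h2⟩ := hf v hb
      have hmem : f v ∈ SS :=
        Finset.mem_union_left _ (Finset.mem_image.mpr ⟨v, Finset.mem_erase.mpr ⟨hb, Finset.mem_univ v⟩, rfl⟩)
      refine Relation.ReflTransGen.head ⟨f v, hmem, h1, rfl⟩ (ih (G.tgt (f v)) ?_)
      omega
  -- `b` reaches everyone using `SS`
  have hfrom : ∀ n, ∀ v : V, c v ≤ n → G.Reach (↑SS) b v := by
    intro n
    induction n with
    | zero =>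
      intro v hv
      have h0 : c v = 0 := Nat.le_zero.mp hv
      have hspec : coreachN G b (c v) v := Nat.find_spec (hco v)
      rw [h0] at hspec
      rw [hspec]; exact Relation.ReflTransGen.refl
    | succ n ih =>
      intro v hv
      by_cases hb : v = b
      · rw [hb]; exact Relation.ReflTransGen.refl
      obtain ⟨h1, h2⟩ := hg v hb
      have hmem : g v ∈ SS :=
        Finset.mem_union_right _ (Finset.mem_image.mpr ⟨v, Finset.mem_erase.mpr ⟨hb, Finset.mem_univ v⟩, rfl⟩)
      exact Relation.ReflTransGen.tail (ih (G.src (g v)) (by omega)) ⟨g v, hmem, rfl, h1⟩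
  -- cardinality bounds
  have hcard_erase : (univ.erase b : Finset V).card = Fintype.card V - 1 := by
    rw [Finset.card_erase_of_mem (Finset.mem_univ b), Finset.card_univ]
  have hSS_card : SS.card ≤ 2 * (Fintype.card V - 1) := by
    calc SS.card ≤ ((univ.erase b).image f).card + ((univ.erase b).image g).card :=
          Finset.card_union_le _ _
    _ ≤ (univ.erase b).card + (univ.erase b).card :=
          Nat.add_le_add (Finset.card_image_le) (Finset.card_image_le)
    _ = 2 * (Fintype.card V - 1) := by rw [hcard_erase]; ring
  have hE_card : 2 * (Fintype.card V - 1) + 1 ≤ Fintype.card E := by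
    have hsum : Fintype.card E = ∑ v : V, G.outdeg v := by
      rw [← Finset.card_univ]
      exact Finset.card_eq_sum_card_fiberwise (f := G.src) (fun e _ => Finset.mem_univ _)
    have hsplit : ∑ v : V, G.outdeg v =
        G.outdeg b + ∑ v ∈ univ.erase b, G.outdeg v :=
      (Finset.add_sum_erase univ G.outdeg (Finset.mem_univ b)).symm
    have hb1 : 1 ≤ G.outdeg b :=
      Finset.card_pos.mpr ⟨e0, Finset.mem_filter.mpr ⟨Finset.mem_univ e0, he0⟩⟩
    have hrest : (univ.erase b).card • 2 ≤ ∑ v ∈ univ.erase b, G.outdeg v :=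
      Finset.card_nsmul_le_sum _ _ _ (fun v hv => (hstable v (Finset.mem_erase.mp hv).1).2)
    rw [smul_eq_mul, hcard_erase] at hrest
    omega
  -- find an edge outside `SS`
  have hlt : SS.card < Fintype.card E := by omega
  obtain ⟨e, he⟩ : ∃ e : E, e ∉ SS := by
    by_contra h
    push_neg at h
    have : (univ : Finset E) ⊆ SS := fun x _ => h x
    have := Finset.card_le_card this
    rw [Finset.card_univ] at this
    omega
  refine ⟨e, fun u v => ?_⟩
  have hsub : ∀ a b' : V, (∃ e' ∈ (↑SS : Set E), G.src e' = a ∧ G.tgt e' = b') →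
      ∃ e' ∈ {e' | e' ≠ e}, G.src e' = a ∧ G.tgt e' = b' := by
    rintro a b' ⟨e', he', h1, h2⟩
    refine ⟨e', ?_, h1, h2⟩
    intro hcontra
    exact he (hcontra ▸ he')
  exact Relation.ReflTransGen.trans
    (Relation.ReflTransGen.mono hsub _ _ (hto (d u) u le_rfl))
    (Relation.ReflTransGen.mono hsub _ _ (hfrom (c v) v le_rfl))
end

section
/- A strongly connected directed multigraph on $n$ vertices has at most $2n - 2$ essential edges, where an edge is essential if its removal destroys strong connectivity. -/
open Relation in
private def stepN {V : Type*} (R : V → V → Prop) : ℕ → V → V → Prop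
  | 0 => Eq
  | n+1 => fun a c => ∃ b, R a b ∧ stepN R n b c

private lemma reflTransGen_iff_stepN {V : Type*} (R : V → V → Prop) (a c : V) :
    Relation.ReflTransGen R a c ↔ ∃ n, stepN R n a c := by
  constructor
  · intro h
    induction h using Relation.ReflTransGen.head_induction_on with
    | refl => exact ⟨0, rfl⟩
    | head hab _ ih => obtain ⟨n, hn⟩ := ih; exact ⟨n+1, _, hab, hn⟩
  · rintro ⟨n, hn⟩
    induction n generalizing a with
    | zero => exact hn ▸ .refl
    | succ n ih =>
        obtain ⟨b, hab, hb⟩ := hn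
        exact Relation.ReflTransGen.head hab (ih _ hb)

private lemma tree_aux {V E : Type*} (G : Multidigraph V E) (r : V)
    (h : ∀ v, G.Reach Set.univ v r) :
    ∃ f : ∀ v : V, v ≠ r → E,
      ∀ (S : Set E), (∀ v (hv : v ≠ r), f v hv ∈ S) → ∀ v, G.Reach S v r := by
  classical
  set R : V → V → Prop := fun a b => ∃ e ∈ (Set.univ : Set E), G.src e = a ∧ G.tgt e = b with hR
  have hN : ∀ v, ∃ n, stepN R n v r := fun v => (reflTransGen_iff_stepN R v r).1 (h v)
  set d : V → ℕ := fun v => Nat.find (hN v) with hd'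
  have hd : ∀ v, stepN R (d v) v r := fun v => Nat.find_spec (hN v)
  have key : ∀ v, v ≠ r → ∃ e : E, G.src e = v ∧ d (G.tgt e) < d v := by
    intro v hv
    have h0 : d v ≠ 0 := by
      intro h0
      have := hd v
      rw [h0] at this
      exact hv this
    obtain ⟨m, hm⟩ := Nat.exists_eq_succ_of_ne_zero h0
    have hv2 := hd v
    rw [hm] at hv2
    obtain ⟨b, ⟨e, _, he1, he2⟩, hb⟩ := hv2
    refine ⟨e, he1, ?_⟩
    have : d (G.tgt e) ≤ m := Nat.find_le (he2 ▸ hb)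
    omega
  choose f hf1 hf2 using key
  refine ⟨f, fun S hS v => ?_⟩
  have main : ∀ n v, d v = n → G.Reach S v r := by
    intro n
    induction n using Nat.strong_induction_on with
    | _ n ih =>
      intro v hv
      by_cases hvr : v = r
      · exact hvr ▸ Relation.ReflTransGen.refl
      · exact Relation.ReflTransGen.head ⟨f v hvr, hS v hvr, hf1 v hvr, rfl⟩
          (ih (d (G.tgt (f v hvr))) (hv ▸ hf2 v hvr) _ rfl)
  exact main (d v) v rfl

private lemma reach_swap {V E : Type*} (G : Multidigraph V E) (S : Set E) (u v : V) :
    (Multidigraph.mk G.tgt G.src).Reach S u v ↔ G.Reach S v u := by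
  unfold Multidigraph.Reach
  constructor
  · intro h
    induction h with
    | refl => exact .refl
    | tail _ hbc ih =>
        obtain ⟨e, he, h1, h2⟩ := hbc
        exact Relation.ReflTransGen.head ⟨e, he, h2, h1⟩ ih
  · intro h
    induction h using Relation.ReflTransGen.head_induction_on with
    | refl => exact .refl
    | head hab _ ih =>
        obtain ⟨e, he, h1, h2⟩ := hab
        exact Relation.ReflTransGen.tail ih ⟨e, he, h2, h1⟩

/-- A strongly connected directed multigraph on `n` vertices has at most `2n - 2` essential
edges, where an edge is essential if its removal destroys strong connectivity. -/
theorem essential_edges_le {V E : Type*} [Fintype V] [Fintype E] [DecidableEq V]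
    (G : Multidigraph V E)
    (hsc : G.StronglyConnectedOn Set.univ) :
    Nat.card {e : E // ¬ G.StronglyConnectedOn {e' | e' ≠ e}} ≤ 2 * Fintype.card V - 2 := by
  classical
  rcases isEmpty_or_nonempty V with hV | hV
  · have : IsEmpty {e : E // ¬ G.StronglyConnectedOn {e' | e' ≠ e}} :=
      ⟨fun ⟨e, he⟩ => he (fun u v => isEmptyElim u)⟩
    simp [Nat.card_of_isEmpty]
  · obtain ⟨r⟩ := hV
    obtain ⟨fin, hfin⟩ := tree_aux G r (fun v => hsc v r)
    obtain ⟨fout, hfout⟩ := tree_aux (Multidigraph.mk G.tgt G.src) r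
      (fun v => (reach_swap G Set.univ v r).2 (hsc r v))
    set A : Set E := Set.range (fun p : {v : V // v ≠ r} => fin p.1 p.2) with hA
    set B : Set E := Set.range (fun p : {v : V // v ≠ r} => fout p.1 p.2) with hB
    have hsub : {e : E | ¬ G.StronglyConnectedOn {e' | e' ≠ e}} ⊆ A ∪ B := by
      intro e he
      by_contra hmem
      rw [Set.mem_union] at hmem
      push_neg at hmem
      apply he
      intro u v
      have hSin : ∀ w (hw : w ≠ r), fin w hw ∈ {e' : E | e' ≠ e} := by
        intro w hw heq
        exact hmem.1 ⟨⟨w, hw⟩, heq.symm ▸ rfl⟩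
      have hSout : ∀ w (hw : w ≠ r), fout w hw ∈ {e' : E | e' ≠ e} := by
        intro w hw heq
        exact hmem.2 ⟨⟨w, hw⟩, heq.symm ▸ rfl⟩
      have h1 : G.Reach {e' | e' ≠ e} u r := hfin _ hSin u
      have h2 : G.Reach {e' | e' ≠ e} r v :=
        (reach_swap G _ v r).1 (hfout _ hSout v)
      exact h1.trans h2
    have hcard : Nat.card {e : E // ¬ G.StronglyConnectedOn {e' | e' ≠ e}} ≤
        (A ∪ B).ncard := by
      have : Nat.card {e : E // ¬ G.StronglyConnectedOn {e' | e' ≠ e}} =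
          ({e : E | ¬ G.StronglyConnectedOn {e' | e' ≠ e}}).ncard :=
        Nat.card_coe_set_eq _
      rw [this]
      exact Set.ncard_le_ncard hsub (Set.toFinite _)
    have hVr : Nat.card {v : V // v ≠ r} = Fintype.card V - 1 := by
      rw [Nat.card_eq_fintype_card, Fintype.card_subtype_compl, Fintype.card_subtype_eq]
    have hAcard : A.ncard ≤ Fintype.card V - 1 := by
      rw [hA, ← Set.image_univ]
      calc ((fun p : {v : V // v ≠ r} => fin p.1 p.2) '' Set.univ).ncard
          ≤ (Set.univ : Set {v : V // v ≠ r}).ncard := Set.ncard_image_le (Set.toFinite _)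
        _ = Nat.card {v : V // v ≠ r} := Set.ncard_univ _
        _ = Fintype.card V - 1 := hVr
    have hBcard : B.ncard ≤ Fintype.card V - 1 := by
      rw [hB, ← Set.image_univ]
      calc ((fun p : {v : V // v ≠ r} => fout p.1 p.2) '' Set.univ).ncard
          ≤ (Set.univ : Set {v : V // v ≠ r}).ncard := Set.ncard_image_le (Set.toFinite _)
        _ = Nat.card {v : V // v ≠ r} := Set.ncard_univ _
        _ = Fintype.card V - 1 := hVr
    have hposV : 1 ≤ Fintype.card V := Fintype.card_pos_iff.2 ⟨r⟩
    have := Set.ncard_union_le A B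
    omega
end

section
/- Let $\Gamma$ be a pointed directed multigraph with no loops at the distinguished vertex $\bullet$ and $\deg^+(\bullet) = \deg^-(\bullet) = m$. For any graph $G$ and pointed graph $\Gamma$, the number of complete pairings $P$ of the $m$ inward with the $m$ outward loose ends (obtained by deleting $\bullet$) such that the resulting graph $G_P$ is isomorphic to $G$, divided by $|\mathrm{Aut}(\Gamma)|$, equals the number of edge-cuttings $C$ of $G$ with $\Gamma_C \cong \Gamma$, divided by $|\mathrm{Aut}(G)|$. -/
/-- An isomorphism of directed multigraphs. -/
structure MDIso {V E V' E' : Type*} (G : Multidigraph V E) (H : Multidigraph V' E') where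
  onV : V ≃ V'
  onE : E ≃ E'
  map_src : ∀ e, H.src (onE e) = onV (G.src e)
  map_tgt : ∀ e, H.tgt (onE e) = onV (G.tgt e)

/-- An isomorphism of pointed directed multigraphs (sending distinguished vertex to
distinguished vertex). -/
structure PMDIso {V E V' E' : Type*} (G : Multidigraph V E) (b : V)
    (H : Multidigraph V' E') (b' : V') extends MDIso G H where
  fix : onV b = b'

/-- Given a pointed graph `Γ` with no loops at the distinguished vertex `b`, removing `b`
leaves loose ends: each edge `u → b` gives an outward loose end and each edge `b → v` an
inward loose end.  A complete pairing `P` of outward with inward loose ends produces the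
graph `G_P` on the ordinary vertices, whose edges are the edges of `Γ` missing `b` together
with one new edge `src e → tgt (P e)` for each edge `e : u → b`. -/
def pairingGraph {W F : Type*} (Γ : Multidigraph W F) (b : W)
    (hnl : ∀ e, ¬ (Γ.src e = b ∧ Γ.tgt e = b))
    (P : {e : F // Γ.tgt e = b} ≃ {e : F // Γ.src e = b}) :
    Multidigraph {v : W // v ≠ b}
      ({e : F // Γ.src e ≠ b ∧ Γ.tgt e ≠ b} ⊕ {e : F // Γ.tgt e = b}) where
  src x := match x with
    | .inl e => ⟨Γ.src e.val, e.2.1⟩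
    | .inr o => ⟨Γ.src o.val, fun h => hnl o.val ⟨h, o.2⟩⟩
  tgt x := match x with
    | .inl e => ⟨Γ.tgt e.val, e.2.2⟩
    | .inr o => ⟨Γ.tgt (P o).val, fun h => hnl (P o).val ⟨(P o).2, h⟩⟩

/-- Given a graph `G` and an edge-cutting `C` (a set of edges of `G`), the pointed graph
`Γ_C` is obtained by cutting each edge of `C` in two and joining all the loose ends to a new
distinguished vertex `•` (represented by `none`). -/
def cutGraph {V E : Type*} (G : Multidigraph V E) (C : Set E) :
    Multidigraph (Option V) ({e : E // e ∉ C} ⊕ ({e : E // e ∈ C} ⊕ {e : E // e ∈ C})) where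
  src x := match x with
    | .inl e => some (G.src e.val)
    | .inr (.inl e) => some (G.src e.val)
    | .inr (.inr _) => none
  tgt x := match x with
    | .inl e => some (G.tgt e.val)
    | .inr (.inl _) => none
    | .inr (.inr e) => some (G.tgt e.val)


section Helpers


variable {V E V' E' V'' E'' : Type*}

theorem MDIso.ext' {G : Multidigraph V E} {H : Multidigraph V' E'} {i j : MDIso G H}
    (hV : i.onV = j.onV) (hE : i.onE = j.onE) : i = j := by
  cases i; cases j; cases hV; cases hE; rfl

theorem PMDIso.ext' {G : Multidigraph V E} {b : V} {H : Multidigraph V' E'} {b' : V'}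
    {i j : PMDIso G b H b'} (hV : i.onV = j.onV) (hE : i.onE = j.onE) : i = j := by
  cases i; cases j; cases MDIso.ext' hV hE; rfl

def MDIso.refl (G : Multidigraph V E) : MDIso G G :=
  ⟨Equiv.refl _, Equiv.refl _, fun _ => rfl, fun _ => rfl⟩

def MDIso.symm {G : Multidigraph V E} {H : Multidigraph V' E'} (i : MDIso G H) : MDIso H G where
  onV := i.onV.symm
  onE := i.onE.symm
  map_src e := by
    have := i.map_src (i.onE.symm e)
    rw [Equiv.apply_symm_apply] at this
    rw [this, Equiv.symm_apply_apply]
  map_tgt e := by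
    have := i.map_tgt (i.onE.symm e)
    rw [Equiv.apply_symm_apply] at this
    rw [this, Equiv.symm_apply_apply]

def MDIso.trans {G : Multidigraph V E} {H : Multidigraph V' E'} {K : Multidigraph V'' E''}
    (i : MDIso G H) (j : MDIso H K) : MDIso G K where
  onV := i.onV.trans j.onV
  onE := i.onE.trans j.onE
  map_src e := by simp [j.map_src, i.map_src]
  map_tgt e := by simp [j.map_tgt, i.map_tgt]

def PMDIso.refl (G : Multidigraph V E) (b : V) : PMDIso G b G b := ⟨MDIso.refl G, rfl⟩

def PMDIso.symm {G : Multidigraph V E} {b : V} {H : Multidigraph V' E'} {b' : V'}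
    (i : PMDIso G b H b') : PMDIso H b' G b :=
  ⟨i.toMDIso.symm, by simp [MDIso.symm, ← i.fix]⟩

def PMDIso.trans {G : Multidigraph V E} {b : V} {H : Multidigraph V' E'} {b' : V'}
    {K : Multidigraph V'' E''} {b'' : V''}
    (i : PMDIso G b H b') (j : PMDIso H b' K b'') : PMDIso G b K b'' :=
  ⟨i.toMDIso.trans j.toMDIso, by simp [MDIso.trans, i.fix, j.fix]⟩

instance {G : Multidigraph V E} {H : Multidigraph V' E'} [Finite V] [Finite E] [Finite V']
    [Finite E'] : Finite (MDIso G H) :=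
  Finite.of_injective (fun i => (i.onV, i.onE))
    (fun i j h => MDIso.ext' (congrArg Prod.fst h) (congrArg Prod.snd h))

instance {G : Multidigraph V E} {b : V} {H : Multidigraph V' E'} {b' : V'} [Finite V] [Finite E]
    [Finite V'] [Finite E'] : Finite (PMDIso G b H b') :=
  Finite.of_injective (fun i => i.toMDIso)
    (fun i j h => PMDIso.ext' (congrArg MDIso.onV h) (congrArg MDIso.onE h))

/-- Transport by a fixed isomorphism. -/
def MDIso.congrIso {G : Multidigraph V E} {H : Multidigraph V' E'} (i : MDIso H G) :
    MDIso H G ≃ MDIso G G where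
  toFun x := i.symm.trans x
  invFun y := i.trans y
  left_inv x := MDIso.ext' (by ext v; simp [MDIso.trans, MDIso.symm])
    (by ext e; simp [MDIso.trans, MDIso.symm])
  right_inv y := MDIso.ext' (by ext v; simp [MDIso.trans, MDIso.symm])
    (by ext e; simp [MDIso.trans, MDIso.symm])

def PMDIso.congrIso {G : Multidigraph V E} {b : V} {H : Multidigraph V' E'} {b' : V'}
    (i : PMDIso H b' G b) : PMDIso H b' G b ≃ PMDIso G b G b where
  toFun x := i.symm.trans x
  invFun y := i.trans y
  left_inv x := PMDIso.ext' (by ext v; simp [PMDIso.trans, PMDIso.symm, MDIso.trans, MDIso.symm])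
    (by ext e; simp [PMDIso.trans, PMDIso.symm, MDIso.trans, MDIso.symm])
  right_inv y := PMDIso.ext' (by ext v; simp [PMDIso.trans, PMDIso.symm, MDIso.trans, MDIso.symm])
    (by ext e; simp [PMDIso.trans, PMDIso.symm, MDIso.trans, MDIso.symm])

noncomputable def sigmaEquivProdOfEquiv {I : Type*} {T : I → Type*} {A : Type*}
    (h : ∀ i, Nonempty (T i) → (T i ≃ A)) :
    (Σ i, T i) ≃ {i // Nonempty (T i)} × A where
  toFun x := (⟨x.1, ⟨x.2⟩⟩, h x.1 ⟨x.2⟩ x.2)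
  invFun p := ⟨p.1.1, (h p.1.1 p.1.2).symm p.2⟩
  left_inv x := by
    obtain ⟨i, t⟩ := x
    simp
  right_inv p := by
    obtain ⟨⟨i, hi⟩, a⟩ := p
    simp

theorem card_sigma_eq {I : Type*} {T : I → Type*} {A : Type*}
    (h : ∀ i, Nonempty (T i) → (T i ≃ A)) :
    Nat.card (Σ i, T i) = Nat.card {i // Nonempty (T i)} * Nat.card A := by
  rw [Nat.card_congr (sigmaEquivProdOfEquiv h), Nat.card_prod]

end Helpers

section OptSum

open scoped Classical
variable {V W : Type*}

noncomputable def optionPointedEquiv (b : W) (g : {v : W // v ≠ b} ≃ V) : Option V ≃ W where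
  toFun x := x.elim b (fun v => (g.symm v).val)
  invFun w := if h : w = b then none else some (g ⟨w, h⟩)
  left_inv x := by
    cases x with
    | none => simp
    | some v => simp [(g.symm v).2, Subtype.coe_eta]
  right_inv w := by
    by_cases h : w = b <;> simp [h]

@[simp] theorem optionPointedEquiv_none (b : W) (g : {v : W // v ≠ b} ≃ V) :
    optionPointedEquiv b g none = b := rfl

@[simp] theorem optionPointedEquiv_some (b : W) (g : {v : W // v ≠ b} ≃ V) (v : V) :
    optionPointedEquiv b g (some v) = (g.symm v).val := rfl

def unOption {b : W} (a : Option V ≃ W) (ha : a none = b) : {w : W // w ≠ b} ≃ V where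
  toFun w := (a.symm w.val).get (by
    rw [Option.isSome_iff_ne_none]
    intro h
    exact w.2 (by rw [(Equiv.symm_apply_eq a).mp h, ha]))
  invFun v := ⟨a (some v), by
    intro h
    have : (some v : Option V) = none := a.injective (by rw [h, ha])
    simp at this⟩
  left_inv w := by
    ext
    simp [Option.some_get]
  right_inv v := by simp

@[simp] theorem unOption_apply {b : W} (a : Option V ≃ W) (ha : a none = b) (v : V)
    (hv : a (some v) ≠ b) : unOption a ha ⟨a (some v), hv⟩ = v := by
  simp [unOption]

@[simp] theorem unOption_spec {b : W} (a : Option V ≃ W) (ha : a none = b)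
    (w : {w : W // w ≠ b}) : a (some (unOption a ha w)) = w.val := by
  simp [unOption]

theorem optionPointedEquiv_unOption {b : W} (a : Option V ≃ W) (ha : a none = b) :
    optionPointedEquiv b (unOption a ha) = a := by
  ext x
  cases x with
  | none => simp [ha]
  | some v => simp [optionPointedEquiv, unOption]

theorem unOption_optionPointedEquiv (b : W) (g : {v : W // v ≠ b} ≃ V)
    (h : optionPointedEquiv b g none = b) : unOption (optionPointedEquiv b g) h = g := by
  ext w
  obtain ⟨w, hw⟩ := w
  simp [unOption, optionPointedEquiv, hw]

variable {α β γ : Type*}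

def sumLeftCompl (e : α ⊕ β ≃ γ) :
    α ≃ {c : γ // c ∉ Set.range (fun x => e (Sum.inr x))} where
  toFun a := ⟨e (Sum.inl a), by rintro ⟨x, hx⟩; simpa using e.injective hx⟩
  invFun c :=
    match h : e.symm c.val with
    | .inl a => a
    | .inr x => absurd ⟨x, by dsimp only; rw [← h, Equiv.apply_symm_apply]⟩ c.2
  left_inv a := by
    dsimp only
    split
    · next a' h =>
      rw [Equiv.symm_apply_apply] at h
      exact (Sum.inl.inj h).symm
    · next x h => simp at h
  right_inv c := by
    dsimp only
    split
    · next a h =>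
      ext
      simp [← h]
    · next x h => exact absurd ⟨x, by dsimp only; rw [← h, Equiv.apply_symm_apply]⟩ c.2

@[simp] theorem sumLeftCompl_apply_val (e : α ⊕ β ≃ γ) (a : α) :
    (sumLeftCompl e a).val = e (Sum.inl a) := rfl
end OptSum

section Main
open scoped Classical

variable {V E W F : Type*} (G : Multidigraph V E) (Γ : Multidigraph W F) (b : W)
  (hnl : ∀ e, ¬ (Γ.src e = b ∧ Γ.tgt e = b))

/-- Decomposition of the edges of `Γ` according to incidence with `b`. -/
noncomputable def edgeDecomp :
    ({e : F // Γ.src e ≠ b ∧ Γ.tgt e ≠ b} ⊕ ({e : F // Γ.tgt e = b} ⊕ {e : F // Γ.src e = b}))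
      ≃ F where
  toFun x := match x with
    | .inl f => f.val
    | .inr (.inl f) => f.val
    | .inr (.inr f) => f.val
  invFun e :=
    if hs : Γ.src e = b then .inr (.inr ⟨e, hs⟩)
    else if ht : Γ.tgt e = b then .inr (.inl ⟨e, ht⟩) else .inl ⟨e, hs, ht⟩
  left_inv x := by
    rcases x with ⟨e, h1, h2⟩ | ⟨e, h⟩ | ⟨e, h⟩
    · simp [h1, h2]
    · have hs : Γ.src e ≠ b := fun hs => hnl e ⟨hs, h⟩
      simp [hs, h]
    · simp [h]
  right_inv e := by
    by_cases hs : Γ.src e = b <;> by_cases ht : Γ.tgt e = b <;> simp [hs, ht]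

/-- Common "middle" data type: a pairing together with unpacked isomorphism data. -/
def MData : Type _ :=
  {x : ({e : F // Γ.tgt e = b} ≃ {e : F // Γ.src e = b}) ×
       ({v : W // v ≠ b} ≃ V) ×
       (({e : F // Γ.src e ≠ b ∧ Γ.tgt e ≠ b} ⊕ {e : F // Γ.tgt e = b}) ≃ E) //
    (∀ y, G.src (x.2.2 y) = x.2.1 ((pairingGraph Γ b hnl x.1).src y)) ∧
    (∀ y, G.tgt (x.2.2 y) = x.2.1 ((pairingGraph Γ b hnl x.1).tgt y)) }

/-- Repackaging the pairing side as `MData`. -/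
def pairingEquivMData :
    (Σ P : {e : F // Γ.tgt e = b} ≃ {e : F // Γ.src e = b},
      MDIso (pairingGraph Γ b hnl P) G) ≃ MData G Γ b hnl where
  toFun x := ⟨(x.1, x.2.onV, x.2.onE), x.2.map_src, x.2.map_tgt⟩
  invFun m := ⟨m.1.1, ⟨m.1.2.1, m.1.2.2, m.2.1, m.2.2⟩⟩
  left_inv x := rfl
  right_inv m := rfl

variable {P : {e : F // Γ.tgt e = b} ≃ {e : F // Γ.src e = b}}

section PsiDef
variable (P : {e : F // Γ.tgt e = b} ≃ {e : F // Γ.src e = b})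
  (v : {v : W // v ≠ b} ≃ V)
  (t : ({e : F // Γ.src e ≠ b ∧ Γ.tgt e ≠ b} ⊕ {e : F // Γ.tgt e = b}) ≃ E)

variable (E) in
/-- The set of edges of `G` coming from the pairing of loose ends. -/
def Cset : Set E := Set.range (fun o : {e : F // Γ.tgt e = b} => t (Sum.inr o))

theorem cset_inj :
    Function.Injective (fun o : {e : F // Γ.tgt e = b} => t (Sum.inr o)) :=
  fun _ _ h => Sum.inr_injective (t.injective h)

/-- Edges in `Cset` correspond to inward loose ends. -/
noncomputable def eInEquiv : {e : E // e ∈ Cset E Γ b t} ≃ {e : F // Γ.tgt e = b} :=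
  (Equiv.ofInjective _ (cset_inj Γ b t)).symm

@[simp] theorem eInEquiv_key (x : {e : E // e ∈ Cset E Γ b t}) :
    t (Sum.inr (eInEquiv Γ b t x)) = x.val :=
  Equiv.apply_ofInjective_symm (cset_inj Γ b t) x

@[simp] theorem sumLeftComplSymm_key (x : {e : E // e ∉ Cset E Γ b t}) :
    t (Sum.inl ((sumLeftCompl t).symm x)) = x.val := by
  conv_rhs => rw [← (sumLeftCompl t).apply_symm_apply x, sumLeftCompl_apply_val]

/-- The edge bijection for the pointed isomorphism produced from pairing data. -/
noncomputable def psiOnE :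
    ({e : E // e ∉ Cset E Γ b t} ⊕ ({e : E // e ∈ Cset E Γ b t} ⊕ {e : E // e ∈ Cset E Γ b t}))
      ≃ F :=
  (Equiv.sumCongr (sumLeftCompl t).symm
    (Equiv.sumCongr (eInEquiv Γ b t) ((eInEquiv Γ b t).trans P))).trans (edgeDecomp Γ b hnl)

@[simp] theorem psiOnE_inl (x) :
    psiOnE Γ b hnl P t (Sum.inl x) = ((sumLeftCompl t).symm x).val := rfl

@[simp] theorem psiOnE_inrl (x) :
    psiOnE Γ b hnl P t (Sum.inr (Sum.inl x)) = (eInEquiv Γ b t x).val := rfl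

@[simp] theorem psiOnE_inrr (x) :
    psiOnE Γ b hnl P t (Sum.inr (Sum.inr x)) = (P (eInEquiv Γ b t x)).val := rfl

end PsiDef

/-- The pointed isomorphism from the cut graph of the paired graph. -/
noncomputable def psiIso (P : {e : F // Γ.tgt e = b} ≃ {e : F // Γ.src e = b})
    (v : {v : W // v ≠ b} ≃ V)
    (t : ({e : F // Γ.src e ≠ b ∧ Γ.tgt e ≠ b} ⊕ {e : F // Γ.tgt e = b}) ≃ E)
    (hs : ∀ y, G.src (t y) = v ((pairingGraph Γ b hnl P).src y))
    (ht : ∀ y, G.tgt (t y) = v ((pairingGraph Γ b hnl P).tgt y)) :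
    PMDIso (cutGraph G (Cset E Γ b t)) (none : Option V) Γ b where
  onV := optionPointedEquiv b v
  onE := psiOnE Γ b hnl P t
  fix := rfl
  map_src := by
    rintro (⟨e, he⟩ | (⟨e, he⟩ | ⟨e, he⟩))
    · have h1 := sumLeftComplSymm_key Γ b t ⟨e, he⟩
      have h2 := hs (Sum.inl ((sumLeftCompl t).symm ⟨e, he⟩))
      rw [show t (Sum.inl ((sumLeftCompl t).symm ⟨e, he⟩)) = e from h1] at h2
      show _ = optionPointedEquiv b v (some (G.src e))
      rw [optionPointedEquiv_some, h2, Equiv.symm_apply_apply]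
      rfl
    · have h1 := eInEquiv_key Γ b t ⟨e, he⟩
      have h2 := hs (Sum.inr (eInEquiv Γ b t ⟨e, he⟩))
      rw [h1] at h2
      show _ = optionPointedEquiv b v (some (G.src e))
      rw [optionPointedEquiv_some, h2, Equiv.symm_apply_apply]
      rfl
    · exact (P (eInEquiv Γ b t ⟨e, he⟩)).2
  map_tgt := by
    rintro (⟨e, he⟩ | (⟨e, he⟩ | ⟨e, he⟩))
    · have h1 := sumLeftComplSymm_key Γ b t ⟨e, he⟩
      have h2 := ht (Sum.inl ((sumLeftCompl t).symm ⟨e, he⟩))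
      rw [show t (Sum.inl ((sumLeftCompl t).symm ⟨e, he⟩)) = e from h1] at h2
      show _ = optionPointedEquiv b v (some (G.tgt e))
      rw [optionPointedEquiv_some, h2, Equiv.symm_apply_apply]
      rfl
    · exact (eInEquiv Γ b t ⟨e, he⟩).2
    · have h1 := eInEquiv_key Γ b t ⟨e, he⟩
      have h2 := ht (Sum.inr (eInEquiv Γ b t ⟨e, he⟩))
      rw [h1] at h2
      show _ = optionPointedEquiv b v (some (G.tgt e))
      rw [optionPointedEquiv_some, h2, Equiv.symm_apply_apply]
      rfl

/-- From pairing data to an edge-cutting with a pointed isomorphism. -/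
noncomputable def Psi (m : MData G Γ b hnl) :
    Σ C : Set E, PMDIso (cutGraph G C) (none : Option V) Γ b :=
  ⟨Cset E Γ b m.1.2.2, psiIso G Γ b hnl m.1.1 m.1.2.1 m.1.2.2 m.2.1 m.2.2⟩

section PhiDef
variable {C : Set E} (ψ : PMDIso (cutGraph G C) (none : Option V) Γ b)

theorem psi_some_ne (x : V) : ψ.onV (some x) ≠ b := by
  intro h
  have := ψ.toMDIso.onV.injective (h.trans ψ.fix.symm)
  simp at this

variable {G Γ b}

/-- Middle edges recovered from a pointed isomorphism with a cut graph. -/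
def jMid (e : {e : E // e ∉ C}) : {f : F // Γ.src f ≠ b ∧ Γ.tgt f ≠ b} :=
  ⟨ψ.onE (Sum.inl e),
   by rw [ψ.map_src (Sum.inl e)]; exact psi_some_ne G Γ b ψ _,
   by rw [ψ.map_tgt (Sum.inl e)]; exact psi_some_ne G Γ b ψ _⟩

/-- Inward loose ends recovered from a pointed isomorphism with a cut graph. -/
def jIn (e : {e : E // e ∈ C}) : {f : F // Γ.tgt f = b} :=
  ⟨ψ.onE (Sum.inr (Sum.inl e)), by rw [ψ.map_tgt (Sum.inr (Sum.inl e))]; exact ψ.fix⟩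

/-- Outward loose ends recovered from a pointed isomorphism with a cut graph. -/
def jOut (e : {e : E // e ∈ C}) : {f : F // Γ.src f = b} :=
  ⟨ψ.onE (Sum.inr (Sum.inr e)), by rw [ψ.map_src (Sum.inr (Sum.inr e))]; exact ψ.fix⟩

theorem jMid_bij : Function.Bijective (jMid ψ) := by
  constructor
  · intro x y h
    exact Sum.inl_injective (ψ.toMDIso.onE.injective (Subtype.ext_iff.mp h))
  · intro m
    rcases h : ψ.toMDIso.onE.symm m.val with e | e | e
    · exact ⟨e, Subtype.ext ((Equiv.symm_apply_eq _).mp h).symm⟩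
    · exfalso
      apply m.2.2
      have h2 : ψ.onE (Sum.inr (Sum.inl e)) = m.val := by rw [← h, Equiv.apply_symm_apply]
      rw [← h2, ψ.map_tgt (Sum.inr (Sum.inl e))]
      exact ψ.fix
    · exfalso
      apply m.2.1
      have h2 : ψ.onE (Sum.inr (Sum.inr e)) = m.val := by rw [← h, Equiv.apply_symm_apply]
      rw [← h2, ψ.map_src (Sum.inr (Sum.inr e))]
      exact ψ.fix

theorem jIn_bij : Function.Bijective (jIn ψ) := by
  constructor
  · intro x y h
    exact Sum.inl_injective (Sum.inr_injective (ψ.toMDIso.onE.injective (Subtype.ext_iff.mp h)))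
  · intro o
    rcases h : ψ.toMDIso.onE.symm o.val with e | e | e
    · exfalso
      have h2 : ψ.onE (Sum.inl e) = o.val := by rw [← h, Equiv.apply_symm_apply]
      have := o.2
      rw [← h2, ψ.map_tgt (Sum.inl e)] at this
      exact psi_some_ne G Γ b ψ _ this
    · exact ⟨e, Subtype.ext ((Equiv.symm_apply_eq _).mp h).symm⟩
    · exfalso
      have h2 : ψ.onE (Sum.inr (Sum.inr e)) = o.val := by rw [← h, Equiv.apply_symm_apply]
      have := o.2
      rw [← h2, ψ.map_tgt (Sum.inr (Sum.inr e))] at this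
      exact psi_some_ne G Γ b ψ _ this

theorem jOut_bij : Function.Bijective (jOut ψ) := by
  constructor
  · intro x y h
    exact Sum.inr_injective (Sum.inr_injective (ψ.toMDIso.onE.injective (Subtype.ext_iff.mp h)))
  · intro o
    rcases h : ψ.toMDIso.onE.symm o.val with e | e | e
    · exfalso
      have h2 : ψ.onE (Sum.inl e) = o.val := by rw [← h, Equiv.apply_symm_apply]
      have := o.2
      rw [← h2, ψ.map_src (Sum.inl e)] at this
      exact psi_some_ne G Γ b ψ _ this
    · exfalso
      have h2 : ψ.onE (Sum.inr (Sum.inl e)) = o.val := by rw [← h, Equiv.apply_symm_apply]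
      have := o.2
      rw [← h2, ψ.map_src (Sum.inr (Sum.inl e))] at this
      exact psi_some_ne G Γ b ψ _ this
    · exact ⟨e, Subtype.ext ((Equiv.symm_apply_eq _).mp h).symm⟩

/-- The classification map sending an edge of `G` to the corresponding edge data of `Γ`. -/
noncomputable def chi (e : E) :
    ({f : F // Γ.src f ≠ b ∧ Γ.tgt f ≠ b} ⊕ {f : F // Γ.tgt f = b}) :=
  if h : e ∈ C then .inr (jIn ψ ⟨e, h⟩) else .inl (jMid ψ ⟨e, h⟩)

theorem chi_bij : Function.Bijective (chi ψ) := by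
  constructor
  · intro x y h
    unfold chi at h
    split_ifs at h with h1 h2 h2
    · exact Subtype.ext_iff.mp ((jIn_bij ψ).1 (Sum.inr_injective h))
    · exact Subtype.ext_iff.mp ((jMid_bij ψ).1 (Sum.inl_injective h))
  · rintro (m | o)
    · obtain ⟨⟨e, he⟩, hm⟩ := (jMid_bij ψ).2 m
      exact ⟨e, by rw [chi, dif_neg he, hm]⟩
    · obtain ⟨⟨e, he⟩, ho⟩ := (jIn_bij ψ).2 o
      exact ⟨e, by rw [chi, dif_pos he, ho]⟩

/-- The pairing recovered from a pointed isomorphism with a cut graph. -/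
noncomputable def pOf : {e : F // Γ.tgt e = b} ≃ {e : F // Γ.src e = b} :=
  (Equiv.ofBijective _ (jIn_bij ψ)).symm.trans (Equiv.ofBijective _ (jOut_bij ψ))

theorem pOf_jIn (x : {e : E // e ∈ C}) : pOf ψ (jIn ψ x) = jOut ψ x := by
  have h : (Equiv.ofBijective _ (jIn_bij ψ)).symm (jIn ψ x) = x :=
    (Equiv.ofBijective _ (jIn_bij ψ)).symm_apply_apply x
  show (Equiv.ofBijective _ (jOut_bij ψ)) ((Equiv.ofBijective _ (jIn_bij ψ)).symm (jIn ψ x)) = _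
  rw [h]
  rfl

theorem pOf_apply (x : {e : E // e ∈ C}) (h : Γ.tgt (ψ.onE (Sum.inr (Sum.inl x))) = b) :
    pOf ψ ⟨ψ.onE (Sum.inr (Sum.inl x)), h⟩ = jOut ψ x :=
  pOf_jIn ψ x

theorem phi_src_cond (hnl : ∀ e, ¬ (Γ.src e = b ∧ Γ.tgt e = b)) :
    ∀ y, G.src ((Equiv.ofBijective _ (chi_bij ψ)).symm y) =
      unOption ψ.toMDIso.onV ψ.fix ((pairingGraph Γ b hnl (pOf ψ)).src y) := by
  intro y
  obtain ⟨e, rfl⟩ := (chi_bij ψ).2 y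
  have h0 : (Equiv.ofBijective _ (chi_bij ψ)).symm (chi ψ e) = e :=
    (Equiv.ofBijective _ (chi_bij ψ)).symm_apply_apply e
  rw [h0]
  by_cases he : e ∈ C
  · rw [chi, dif_pos he]
    simp only [pairingGraph, jIn]
    refine Option.some_injective V (ψ.toMDIso.onV.injective ?_)
    rw [unOption_spec]
    exact (ψ.map_src (Sum.inr (Sum.inl ⟨e, he⟩))).symm
  · rw [chi, dif_neg he]
    simp only [pairingGraph, jMid]
    refine Option.some_injective V (ψ.toMDIso.onV.injective ?_)
    rw [unOption_spec]
    exact (ψ.map_src (Sum.inl ⟨e, he⟩)).symm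

theorem phi_tgt_cond (hnl : ∀ e, ¬ (Γ.src e = b ∧ Γ.tgt e = b)) :
    ∀ y, G.tgt ((Equiv.ofBijective _ (chi_bij ψ)).symm y) =
      unOption ψ.toMDIso.onV ψ.fix ((pairingGraph Γ b hnl (pOf ψ)).tgt y) := by
  intro y
  obtain ⟨e, rfl⟩ := (chi_bij ψ).2 y
  have h0 : (Equiv.ofBijective _ (chi_bij ψ)).symm (chi ψ e) = e :=
    (Equiv.ofBijective _ (chi_bij ψ)).symm_apply_apply e
  rw [h0]
  by_cases he : e ∈ C
  · rw [chi, dif_pos he]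
    simp only [pairingGraph, jIn]
    refine Option.some_injective V (ψ.toMDIso.onV.injective ?_)
    rw [unOption_spec]
    dsimp only
    rw [pOf_apply ψ ⟨e, he⟩]
    exact (ψ.map_tgt (Sum.inr (Sum.inr ⟨e, he⟩))).symm
  · rw [chi, dif_neg he]
    simp only [pairingGraph, jMid]
    refine Option.some_injective V (ψ.toMDIso.onV.injective ?_)
    rw [unOption_spec]
    exact (ψ.map_tgt (Sum.inl ⟨e, he⟩)).symm

end PhiDef

/-- From an edge-cutting with a pointed isomorphism to pairing data. -/
noncomputable def Phi (x : Σ C : Set E, PMDIso (cutGraph G C) (none : Option V) Γ b) :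
    MData G Γ b hnl :=
  ⟨(pOf x.2, unOption x.2.toMDIso.onV x.2.fix, (Equiv.ofBijective _ (chi_bij x.2)).symm),
   phi_src_cond x.2 hnl, phi_tgt_cond x.2 hnl⟩

theorem phi_psi (m : MData G Γ b hnl) : Phi G Γ b hnl (Psi G Γ b hnl m) = m := by
  obtain ⟨⟨P, v, t⟩, hs, ht⟩ := m
  apply Subtype.ext
  set ψ := psiIso G Γ b hnl P v t hs ht with hψdef
  show (pOf ψ, unOption ψ.toMDIso.onV ψ.fix, (Equiv.ofBijective _ (chi_bij ψ)).symm)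
    = (P, v, t)
  have hjIn : ∀ x, jIn ψ x = eInEquiv Γ b t x := fun x => Subtype.ext rfl
  have htt : Equiv.ofBijective _ (chi_bij ψ) = t.symm := by
    ext e
    show chi ψ e = t.symm e
    by_cases he : e ∈ Cset E Γ b t
    · rw [chi, dif_pos he]
      have h1 : t.symm e = Sum.inr (eInEquiv Γ b t ⟨e, he⟩) := by
        rw [Equiv.symm_apply_eq]
        exact (eInEquiv_key Γ b t ⟨e, he⟩).symm
      rw [h1, hjIn ⟨e, he⟩]
    · rw [chi, dif_neg he]
      have h1 : t.symm e = Sum.inl ((sumLeftCompl t).symm ⟨e, he⟩) := by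
        rw [Equiv.symm_apply_eq]
        exact (sumLeftComplSymm_key Γ b t ⟨e, he⟩).symm
      rw [h1]
      exact congrArg Sum.inl (Subtype.ext rfl)
  refine Prod.ext ?_ (Prod.ext ?_ ?_)
  · show pOf ψ = P
    ext o
    obtain ⟨x, rfl⟩ : ∃ x, eInEquiv Γ b t x = o := ⟨(eInEquiv Γ b t).symm o, by simp⟩
    show (pOf ψ (eInEquiv Γ b t x)).val = (P (eInEquiv Γ b t x)).val
    rw [← hjIn x, pOf_jIn ψ x]
    rfl
  · show unOption ψ.toMDIso.onV ψ.fix = v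
    exact unOption_optionPointedEquiv b v ψ.fix
  · show (Equiv.ofBijective _ (chi_bij ψ)).symm = t
    rw [htt, Equiv.symm_symm]

theorem phi_inj : Function.Injective (Phi G Γ b hnl) := by
  rintro ⟨C₁, ψ₁⟩ ⟨C₂, ψ₂⟩ h
  have hP : pOf ψ₁ = pOf ψ₂ := congrArg (fun m => m.val.1) h
  have hv : unOption ψ₁.toMDIso.onV ψ₁.fix = unOption ψ₂.toMDIso.onV ψ₂.fix :=
    congrArg (fun m => m.val.2.1) h
  have hT : (Equiv.ofBijective _ (chi_bij ψ₁)).symm = (Equiv.ofBijective _ (chi_bij ψ₂)).symm :=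
    congrArg (fun m => m.val.2.2) h
  have h2 : Equiv.ofBijective _ (chi_bij ψ₁) = Equiv.ofBijective _ (chi_bij ψ₂) := by
    have h3 := congrArg Equiv.symm hT
    rwa [Equiv.symm_symm, Equiv.symm_symm] at h3
  have hchi : ∀ e, chi ψ₁ e = chi ψ₂ e := fun e =>
    congrArg (fun (q : E ≃ _) => q e) h2
  have hC : C₁ = C₂ := by
    ext e
    constructor
    · intro he
      by_contra he2
      have h4 := hchi e
      rw [chi, dif_pos he, chi, dif_neg he2] at h4
      simp at h4
    · intro he
      by_contra he2
      have h4 := hchi e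
      rw [chi, dif_neg he2, chi, dif_pos he] at h4
      simp at h4
  subst hC
  have haV : ψ₁.toMDIso.onV = ψ₂.toMDIso.onV := by
    rw [← optionPointedEquiv_unOption ψ₁.toMDIso.onV ψ₁.fix,
      ← optionPointedEquiv_unOption ψ₂.toMDIso.onV ψ₂.fix, hv]
  have haE : ψ₁.toMDIso.onE = ψ₂.toMDIso.onE := by
    ext x
    rcases x with e | e | e
    · have h3 := hchi e.val
      rw [chi, dif_neg e.2, chi, dif_neg e.2] at h3
      exact congrArg Subtype.val (Sum.inl_injective h3)
    · have h3 := hchi e.val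
      rw [chi, dif_pos e.2, chi, dif_pos e.2] at h3
      exact congrArg Subtype.val (Sum.inr_injective h3)
    · have h3 := hchi e.val
      rw [chi, dif_pos e.2, chi, dif_pos e.2] at h3
      have h4 : jIn ψ₁ ⟨e.val, e.2⟩ = jIn ψ₂ ⟨e.val, e.2⟩ := Sum.inr_injective h3
      have h5 : jOut ψ₁ ⟨e.val, e.2⟩ = jOut ψ₂ ⟨e.val, e.2⟩ := by
        rw [← pOf_jIn ψ₁ ⟨e.val, e.2⟩, ← pOf_jIn ψ₂ ⟨e.val, e.2⟩, h4, hP]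
      exact congrArg Subtype.val h5
  exact congrArg (Sigma.mk C₁) (PMDIso.ext' haV haE)

theorem phi_bij : Function.Bijective (Phi G Γ b hnl) :=
  ⟨phi_inj G Γ b hnl, fun m => ⟨Psi G Γ b hnl m, phi_psi G Γ b hnl m⟩⟩

end Main

/-- Lemma 2.10 of Liu–Xu: for a pointed graph `Γ` with no loops at `•` and
`deg⁺(•) = deg⁻(•) = m`, and any graph `G`,
`#{P ∈ 𝒫(Γ) ∣ G_P ≅ G} / |Aut Γ| = #{C ∈ 𝒞(G) ∣ Γ_C ≅ Γ} / |Aut G|`. -/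
theorem pairing_cutting_count {V E W F : Type*} [Fintype V] [Fintype E] [Fintype W] [Fintype F]
    (G : Multidigraph V E) (Γ : Multidigraph W F) (b : W) (m : ℕ)
    (hnl : ∀ e, ¬ (Γ.src e = b ∧ Γ.tgt e = b))
    (hout : Nat.card {e : F // Γ.src e = b} = m)
    (hin : Nat.card {e : F // Γ.tgt e = b} = m) :
    (Nat.card {P : {e : F // Γ.tgt e = b} ≃ {e : F // Γ.src e = b} //
        Nonempty (MDIso (pairingGraph Γ b hnl P) G)} : ℚ) /
      (Nat.card (PMDIso Γ b Γ b) : ℚ) =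
    (Nat.card {C : Set E // Nonempty (PMDIso (cutGraph G C) (none : Option V) Γ b)} : ℚ) /
      (Nat.card (MDIso G G) : ℚ) := by
  classical
  have e1 := card_sigma_eq
    (fun P (hP : Nonempty (MDIso (pairingGraph Γ b hnl P) G)) => MDIso.congrIso hP.some)
  have e2 := card_sigma_eq
    (fun (C : Set E) (hC : Nonempty (PMDIso (cutGraph G C) (none : Option V) Γ b)) =>
      PMDIso.congrIso hC.some)
  have e3 : Nat.card (Σ P : {e : F // Γ.tgt e = b} ≃ {e : F // Γ.src e = b},
      MDIso (pairingGraph Γ b hnl P) G)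
      = Nat.card (Σ C : Set E, PMDIso (cutGraph G C) (none : Option V) Γ b) := by
    rw [Nat.card_congr (pairingEquivMData G Γ b hnl)]
    exact (Nat.card_congr (Equiv.ofBijective _ (phi_bij G Γ b hnl))).symm
  have key : Nat.card {P : {e : F // Γ.tgt e = b} ≃ {e : F // Γ.src e = b} //
        Nonempty (MDIso (pairingGraph Γ b hnl P) G)} * Nat.card (MDIso G G)
      = Nat.card {C : Set E // Nonempty (PMDIso (cutGraph G C) (none : Option V) Γ b)} *
        Nat.card (PMDIso Γ b Γ b) := by
    rw [← e1, e3, e2]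
  have hG : 0 < Nat.card (MDIso G G) := by
    have : Nonempty (MDIso G G) := ⟨MDIso.refl G⟩
    exact Nat.card_pos
  have hΓ : 0 < Nat.card (PMDIso Γ b Γ b) := by
    have : Nonempty (PMDIso Γ b Γ b) := ⟨PMDIso.refl Γ b⟩
    exact Nat.card_pos
  rw [div_eq_div_iff (by exact_mod_cast hΓ.ne') (by exact_mod_cast hG.ne')]
  exact_mod_cast key
end

section
/- Define $\tilde{z}(G) = \sum_{C \in \mathscr{C}(G)} \frac{(-1)^{\mathfrak{m}(C)} \varphi(\Gamma_C)}{(\mathfrak{m}(C) + w(G))!}$ for a directed multigraph $G$, where $\mathscr{C}(G)$ is the set of subsets of edges of $G$, $\mathfrak{m}(C) = |C|$, and $w(G) = |E(G)| - |V(G)|$. If $G_1$ and $G_2$ are directed multigraphs and the invariant $\varphi$ satisfies $\varphi(\Gamma_{C_1 \times C_2}) = \binom{\mathfrak{m}(C_1) + \mathfrak{m}(C_2) + w(G_1) + w(G_2)}{\mathfrak{m}(C_1) + w(G_1)} \varphi(\Gamma_{C_1}) \varphi(\Gamma_{C_2})$ for all edge-cuttings $C_1$ of $G_1$ and $C_2$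 of $G_2$, then $\tilde{z}(G_1 \cup G_2) = \tilde{z}(G_1) \tilde{z}(G_2)$, where $G_1 \cup G_2$ is the disjoint union. -/
open Finset

/-- Multiplicativity of `z̃` under disjoint union (Proposition 2.13 of Liu–Xu).
Edge-cuttings of a graph with (finite) edge type `E` are identified with `Finset E`;
cuttings of the disjoint union `G₁ ∪ G₂` are pairs of cuttings, `𝔪(C) = |C|`, weights add,
and the invariant `φ` of the associated pointed graphs satisfies
`φ(Γ_{C₁×C₂}) = C(𝔪(C₁)+𝔪(C₂)+w₁+w₂, 𝔪(C₁)+w₁) φ(Γ_{C₁}) φ(Γ_{C₂})`.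
Then `z̃(G₁ ∪ G₂) = z̃(G₁) z̃(G₂)`. -/
theorem ztilde_multiplicative {E₁ E₂ : Type*} [Fintype E₁] [Fintype E₂]
    [DecidableEq E₁] [DecidableEq E₂] (w₁ w₂ : ℕ)
    (φ₁ : Finset E₁ → ℕ) (φ₂ : Finset E₂ → ℕ) (φ₁₂ : Finset E₁ → Finset E₂ → ℕ)
    (hφ : ∀ C₁ : Finset E₁, ∀ C₂ : Finset E₂,
      φ₁₂ C₁ C₂ =
        (C₁.card + C₂.card + w₁ + w₂).choose (C₁.card + w₁) * (φ₁ C₁ * φ₂ C₂)) :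
    (∑ C₁ : Finset E₁, ∑ C₂ : Finset E₂,
        (-1 : ℚ) ^ (C₁.card + C₂.card) * (φ₁₂ C₁ C₂ : ℚ) /
          (Nat.factorial (C₁.card + C₂.card + (w₁ + w₂)) : ℚ)) =
      (∑ C₁ : Finset E₁,
          (-1 : ℚ) ^ C₁.card * (φ₁ C₁ : ℚ) / (Nat.factorial (C₁.card + w₁) : ℚ)) *
      (∑ C₂ : Finset E₂,
          (-1 : ℚ) ^ C₂.card * (φ₂ C₂ : ℚ) / (Nat.factorial (C₂.card + w₂) : ℚ)) := by
  rw [Finset.sum_mul_sum]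
  refine Finset.sum_congr rfl fun C₁ _ => Finset.sum_congr rfl fun C₂ _ => ?_
  rw [hφ]
  have key : ((C₁.card + C₂.card + w₁ + w₂).choose (C₁.card + w₁) : ℚ) *
      (C₁.card + w₁).factorial * (C₂.card + w₂).factorial =
      (C₁.card + C₂.card + (w₁ + w₂)).factorial := by
    have h := Nat.add_choose_mul_factorial_mul_factorial (C₂.card + w₂) (C₁.card + w₁)
    have harr : C₂.card + w₂ + (C₁.card + w₁) = C₁.card + C₂.card + w₁ + w₂ := by ring
    rw [harr] at h
    have : C₁.card + C₂.card + (w₁ + w₂) = C₁.card + C₂.card + w₁ + w₂ := by ring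
    rw [this]
    have h' : ((C₁.card + C₂.card + w₁ + w₂).choose (C₁.card + w₁) *
        (C₂.card + w₂).factorial * (C₁.card + w₁).factorial : ℕ) =
        (C₁.card + C₂.card + w₁ + w₂).factorial := h
    push_cast [← h']
    ring
  have h1 : ((C₁.card + w₁).factorial : ℚ) ≠ 0 := by exact_mod_cast (Nat.factorial_pos _).ne'
  have h2 : ((C₂.card + w₂).factorial : ℚ) ≠ 0 := by exact_mod_cast (Nat.factorial_pos _).ne'
  have h3 : ((C₁.card + C₂.card + (w₁ + w₂)).factorial : ℚ) ≠ 0 := by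
    exact_mod_cast (Nat.factorial_pos _).ne'
  field_simp
  rw [pow_add]
  push_cast
  linear_combination ((-1:ℚ)^C₁.card * (-1)^C₂.card * (φ₁ C₁) * (φ₂ C₂)) * key
end

section
/- Every strongly connected directed multigraph in which every non-distinguished vertex is semistable (in-degree $\geq 1$, out-degree $\geq 1$, total degree $\geq 3$) and which has at least two vertices admits a strong reduction: a sequence of steps, each removing a redundant edge or smoothing out an ordinary vertex of in- and out-degree 1, terminating in the single distinguished vertex $\bullet$; moreover, every strong reduction of a graph $\Gamma$ removes exactly $w(\Gamma) = |E(\Gamma)| - |V(\Gamma)|$ edges. -/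
/-- A concrete finite directed multigraph: vertices and edges are finite sets of naturals,
with source and target maps. -/
structure MG where
  V : Finset ℕ
  E : Finset ℕ
  src : ℕ → ℕ
  tgt : ℕ → ℕ

namespace MG

/-- Reachability along directed edges of `G`. -/
def Reach (G : MG) (u v : ℕ) : Prop :=
  Relation.ReflTransGen (fun a b => ∃ e ∈ G.E, G.src e = a ∧ G.tgt e = b) u v

/-- `G` is strongly connected. -/
def StronglyConnected (G : MG) : Prop :=
  ∀ u ∈ G.V, ∀ v ∈ G.V, G.Reach u v

def indeg (G : MG) (v : ℕ) : ℕ := (G.E.filter (fun e => G.tgt e = v)).card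

def outdeg (G : MG) (v : ℕ) : ℕ := (G.E.filter (fun e => G.src e = v)).card

/-- All edges of `G` have endpoints in `G.V`. -/
def WellFormed (G : MG) : Prop := ∀ e ∈ G.E, G.src e ∈ G.V ∧ G.tgt e ∈ G.V

/-- One step removing a redundant edge `e`: the removal keeps the graph strongly connected. -/
def RemoveStep (G G' : MG) : Prop :=
  ∃ e ∈ G.E, G'.V = G.V ∧ G'.E = G.E.erase e ∧
    (∀ f ∈ G'.E, G'.src f = G.src f ∧ G'.tgt f = G.tgt f) ∧
    G'.StronglyConnected

/-- One step smoothing out an ordinary vertex `v` with `deg⁺(v) = deg⁻(v) = 1`: remove `v`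
together with its unique incoming edge `ein` and outgoing edge `eout`, and join the two
neighbours by a single new edge `enew`. -/
def SmoothStep (b : ℕ) (G G' : MG) : Prop :=
  ∃ v ∈ G.V, v ≠ b ∧ G.indeg v = 1 ∧ G.outdeg v = 1 ∧
    ∃ ein ∈ G.E, ∃ eout ∈ G.E, G.tgt ein = v ∧ G.src eout = v ∧ ein ≠ eout ∧
      ∃ enew ∉ G.E,
        G'.V = G.V.erase v ∧ G'.E = insert enew ((G.E.erase ein).erase eout) ∧
        G'.src enew = G.src ein ∧ G'.tgt enew = G.tgt eout ∧
        (∀ f ∈ (G.E.erase ein).erase eout, G'.src f = G.src f ∧ G'.tgt f = G.tgt f)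

/-- `Red b G k` : there is a strong reduction of the pointed graph `(G, b)` down to the single
distinguished vertex `b` with no edges, in which exactly `k` (redundant-)edge-removal steps
are performed (smoothing steps are not counted). -/
inductive Red (b : ℕ) : MG → ℕ → Prop
  | refl (G : MG) (hV : G.V = {b}) (hE : G.E = ∅) : Red b G 0
  | removal (G G' : MG) (k : ℕ) (h : RemoveStep G G') (hr : Red b G' k) : Red b G (k + 1)
  | smooth (G G' : MG) (k : ℕ) (h : SmoothStep b G G') (hr : Red b G' k) : Red b G k

/-- Ear-decomposition-generated class of pointed graphs. -/
inductive Built (b : ℕ) : MG → Prop where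
  | point (G : MG) (hV : G.V = {b}) (hE : G.E = ∅) : Built b G
  | addEdge (H G : MG) (e : ℕ) (he : e ∉ H.E) (hB : Built b H)
      (hV : G.V = H.V) (hE : G.E = insert e H.E)
      (hs : G.src e ∈ H.V) (ht : G.tgt e ∈ H.V)
      (hagree : ∀ f ∈ H.E, G.src f = H.src f ∧ G.tgt f = H.tgt f) : Built b G
  | subdiv (H G : MG) (e v e1 e2 : ℕ) (hB : Built b H)
      (heH : e ∈ H.E) (hv : v ∉ H.V)
      (h1 : e1 ∉ H.E.erase e) (h2 : e2 ∉ H.E.erase e)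
      (h12 : e1 ≠ e2) (h1e : e1 ≠ e) (h2e : e2 ≠ e)
      (hV : G.V = insert v H.V)
      (hE : G.E = insert e1 (insert e2 (H.E.erase e)))
      (hs1 : G.src e1 = H.src e) (ht1 : G.tgt e1 = v)
      (hs2 : G.src e2 = v) (ht2 : G.tgt e2 = H.tgt e)
      (hagree : ∀ f ∈ H.E.erase e, G.src f = H.src f ∧ G.tgt f = H.tgt f) : Built b G

theorem built_b_mem {b : ℕ} {G : MG} (h : Built b G) : b ∈ G.V := by
  induction h with
  | point G hV hE => simp [hV]
  | addEdge H G e he hB hV hE hs ht hagree ih => rw [hV]; exact ih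
  | subdiv H G e v e1 e2 hB heH hv h1 h2 h12 h1e h2e hV hE hs1 ht1 hs2 ht2 hagree ih =>
      rw [hV]; exact Finset.mem_insert_of_mem ih

theorem built_wf {b : ℕ} {G : MG} (h : Built b G) : G.WellFormed := by
  induction h with
  | point G hV hE => intro e he; simp [hE] at he
  | addEdge H G e he hB hV hE hs ht hagree ih =>
      intro f hf
      rw [hE, Finset.mem_insert] at hf
      rcases hf with rfl | hf
      · exact ⟨hV ▸ hs, hV ▸ ht⟩
      · obtain ⟨h1, h2⟩ := hagree f hf
        rw [hV, h1, h2]; exact ih f hf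
  | subdiv H G e v e1 e2 hB heH hv h1 h2 h12 h1e h2e hV hE hs1 ht1 hs2 ht2 hagree ih =>
      intro f hf
      rw [hE, Finset.mem_insert, Finset.mem_insert] at hf
      rcases hf with rfl | rfl | hf
      · rw [hs1, ht1, hV]
        exact ⟨Finset.mem_insert_of_mem (ih e heH).1, Finset.mem_insert_self _ _⟩
      · rw [hs2, ht2, hV]
        exact ⟨Finset.mem_insert_self _ _, Finset.mem_insert_of_mem (ih e heH).2⟩
      · obtain ⟨hh1, hh2⟩ := hagree f hf
        rw [hV, hh1, hh2]
        have := ih f (Finset.mem_of_mem_erase hf)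
        exact ⟨Finset.mem_insert_of_mem this.1, Finset.mem_insert_of_mem this.2⟩


theorem reach_mono {G G' : MG}
    (h : ∀ f ∈ G.E, f ∈ G'.E ∧ G'.src f = G.src f ∧ G'.tgt f = G.tgt f)
    {u v : ℕ} (hr : G.Reach u v) : G'.Reach u v := by
  refine Relation.ReflTransGen.mono ?_ _ _ hr
  rintro a c ⟨e, he, hs, ht⟩
  obtain ⟨h1, h2, h3⟩ := h e he
  exact ⟨e, h1, by rw [h2, hs], by rw [h3, ht]⟩

theorem built_sc {b : ℕ} {G : MG} (h : Built b G) : G.StronglyConnected := by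
  induction h with
  | point G hV hE =>
      intro u hu w hw
      rw [hV, Finset.mem_singleton] at hu hw
      rw [hu, hw]; exact Relation.ReflTransGen.refl
  | addEdge H G e he hB hV hE hs ht hagree ih =>
      intro u hu w hw
      rw [hV] at hu hw
      refine reach_mono ?_ (ih u hu w hw)
      intro f hf
      exact ⟨hE ▸ Finset.mem_insert_of_mem hf, (hagree f hf).1, (hagree f hf).2⟩
  | subdiv H G e v e1 e2 hB heH hv h1 h2 h12 h1e h2e hV hE hs1 ht1 hs2 ht2 hagree ih =>
      have hwf := built_wf hB
      -- lifting of reachability from H to G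
      have lift : ∀ {u w : ℕ}, H.Reach u w → G.Reach u w := by
        intro u w hr
        induction hr with
        | refl => exact Relation.ReflTransGen.refl
        | tail hr' hstep ihr =>
            rename_i c w'
            obtain ⟨f, hf, hsf, htf⟩ := hstep
            by_cases hfe : f = e
            · subst hfe
              refine Relation.ReflTransGen.tail (b := v) (Relation.ReflTransGen.tail (c := v) ihr ?_) ?_
              · exact ⟨e1, hE ▸ Finset.mem_insert_self _ _, by rw [hs1, hsf], ht1⟩
              · exact ⟨e2, hE ▸ Finset.mem_insert_of_mem (Finset.mem_insert_self _ _),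
                  hs2, by rw [ht2, htf]⟩
            · have hf' : f ∈ H.E.erase e := Finset.mem_erase.2 ⟨hfe, hf⟩
              refine Relation.ReflTransGen.tail ihr ?_
              exact ⟨f, hE ▸ Finset.mem_insert_of_mem (Finset.mem_insert_of_mem hf'),
                by rw [(hagree f hf').1, hsf], by rw [(hagree f hf').2, htf]⟩
      have stepout : G.Reach v (H.tgt e) :=
        Relation.ReflTransGen.single
          ⟨e2, hE ▸ Finset.mem_insert_of_mem (Finset.mem_insert_self _ _), hs2, ht2⟩
      have stepin : ∀ {u : ℕ}, H.Reach u (H.src e) → G.Reach u v := by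
        intro u hr
        exact Relation.ReflTransGen.tail (lift hr)
          ⟨e1, hE ▸ Finset.mem_insert_self _ _, hs1, ht1⟩
      intro u hu w hw
      rw [hV, Finset.mem_insert] at hu hw
      rcases hu with rfl | hu
      · rcases hw with rfl | hw
        · exact Relation.ReflTransGen.refl
        · exact Relation.ReflTransGen.trans stepout (lift (ih _ (hwf e heH).2 _ hw))
      · rcases hw with rfl | hw
        · exact stepin (ih _ hu _ (hwf e heH).1)
        · exact lift (ih _ hu _ hw)


theorem built_red {b : ℕ} {G : MG} (h : Built b G) : ∃ k, Red b G k := by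
  induction h with
  | point G hV hE => exact ⟨0, Red.refl G hV hE⟩
  | addEdge H G e he hB hV hE hs ht hagree ih =>
      obtain ⟨k, hk⟩ := ih
      refine ⟨k + 1, Red.removal G H k ?_ hk⟩
      refine ⟨e, hE ▸ Finset.mem_insert_self _ _, hV.symm, ?_, ?_, built_sc hB⟩
      · rw [hE, Finset.erase_insert he]
      · intro f hf
        exact ⟨(hagree f hf).1.symm, (hagree f hf).2.symm⟩
  | subdiv H G e v e1 e2 hB heH hv h1 h2 h12 h1e h2e hV hE hs1 ht1 hs2 ht2 hagree ih =>
      obtain ⟨k, hk⟩ := ih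
      have hwf := built_wf hB
      refine ⟨k, Red.smooth G H k ?_ hk⟩
      have hvb : v ≠ b := fun hvb => hv (hvb ▸ built_b_mem hB)
      have he1G : e1 ∈ G.E := hE ▸ Finset.mem_insert_self _ _
      have he2G : e2 ∈ G.E := hE ▸ Finset.mem_insert_of_mem (Finset.mem_insert_self _ _)
      have htgtv : H.tgt e ≠ v := fun hh => hv (hh ▸ (hwf e heH).2)
      have hsrcv : H.src e ≠ v := fun hh => hv (hh ▸ (hwf e heH).1)
      have hin : G.E.filter (fun g => G.tgt g = v) = {e1} := by
        apply Finset.ext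
        intro g
        simp only [Finset.mem_filter, Finset.mem_singleton]
        constructor
        · rintro ⟨hg, htg⟩
          rw [hE, Finset.mem_insert, Finset.mem_insert] at hg
          rcases hg with rfl | rfl | hg
          · rfl
          · exact absurd (ht2 ▸ htg) htgtv
          · exact absurd (by rw [← htg, (hagree g hg).2]; exact (hwf g (Finset.mem_of_mem_erase hg)).2 : v ∈ H.V) hv
        · rintro rfl; exact ⟨he1G, ht1⟩
      have hout : G.E.filter (fun g => G.src g = v) = {e2} := by
        apply Finset.ext
        intro g
        simp only [Finset.mem_filter, Finset.mem_singleton]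
        constructor
        · rintro ⟨hg, htg⟩
          rw [hE, Finset.mem_insert, Finset.mem_insert] at hg
          rcases hg with rfl | rfl | hg
          · exact absurd (hs1 ▸ htg) hsrcv
          · rfl
          · exact absurd (by rw [← htg, (hagree g hg).1]; exact (hwf g (Finset.mem_of_mem_erase hg)).1 : v ∈ H.V) hv
        · rintro rfl; exact ⟨he2G, hs2⟩
      have heraser : (G.E.erase e1).erase e2 = H.E.erase e := by
        rw [hE, Finset.erase_insert, Finset.erase_insert h2]
        simp only [Finset.mem_insert]
        push_neg
        exact ⟨h12, h1⟩
      refine ⟨v, hV ▸ Finset.mem_insert_self _ _, hvb, ?_, ?_,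
        e1, he1G, e2, he2G, ht1, hs2, h12, e, ?_, ?_, ?_, hs1.symm, ht2.symm, ?_⟩
      · unfold MG.indeg; rw [hin]; rfl
      · unfold MG.outdeg; rw [hout]; rfl
      · rw [hE]
        simp only [Finset.mem_insert, Finset.mem_erase]
        push_neg
        exact ⟨Ne.symm h1e, Ne.symm h2e, fun hh _ => absurd rfl hh⟩
      · rw [hV, Finset.erase_insert hv]
      · rw [heraser, Finset.insert_erase heH]
      · intro f hf
        rw [heraser] at hf
        exact ⟨(hagree f hf).1.symm, (hagree f hf).2.symm⟩


def Walk (Γ : MG) : ℕ → List ℕ → ℕ → Prop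
  | a, [], c => a = c
  | a, f :: fs, c => f ∈ Γ.E ∧ Γ.src f = a ∧ Walk Γ (Γ.tgt f) fs c

theorem walk_of_reach {Γ : MG} {u w : ℕ} (h : Γ.Reach u w) : ∃ fs, Walk Γ u fs w := by
  induction h using Relation.ReflTransGen.head_induction_on with
  | refl => exact ⟨[], rfl⟩
  | head hstep _ ih =>
      obtain ⟨e, he, hs, ht⟩ := hstep
      obtain ⟨fs, hfs⟩ := ih
      exact ⟨e :: fs, he, hs, ht ▸ hfs⟩

theorem dropUntil {Γ : MG} {w u : ℕ} :
    ∀ (hs : List ℕ) (x : ℕ), Walk Γ x hs w → u ∈ x :: hs.map Γ.tgt →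
    ∃ hs', Walk Γ u hs' w ∧ (∀ g ∈ hs', g ∈ hs) ∧
      (u :: hs'.map Γ.tgt) <:+ (x :: hs.map Γ.tgt) := by
  intro hs
  induction hs with
  | nil =>
      intro x hw hu
      simp only [List.map_nil, List.mem_singleton] at hu
      exact ⟨[], hu ▸ hw, by simp, hu ▸ List.suffix_refl _⟩
  | cons h t ih =>
      intro x hw hu
      rcases List.mem_cons.1 hu with rfl | hu'
      · exact ⟨h :: t, hw, fun g hg => hg, List.suffix_refl _⟩
      · obtain ⟨hE, hsrc, hw'⟩ := hw
        simp only [List.map_cons] at hu'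
        obtain ⟨hs', h1, h2, h3⟩ := ih (Γ.tgt h) hw' hu'
        exact ⟨hs', h1, fun g hg => List.mem_cons_of_mem _ (h2 g hg),
          h3.trans (List.suffix_cons _ _)⟩

theorem shorten {Γ : MG} {w : ℕ} :
    ∀ (fs : List ℕ) (u : ℕ), Walk Γ u fs w →
    ∃ gs, Walk Γ u gs w ∧ (∀ g ∈ gs, g ∈ fs) ∧ (u :: gs.map Γ.tgt).Nodup := by
  intro fs
  induction fs with
  | nil => intro u hw; exact ⟨[], hw, by simp, List.nodup_singleton u⟩
  | cons f fs' ih =>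
      intro u hw
      obtain ⟨hE, hsrc, hw'⟩ := hw
      obtain ⟨gs', hw1, hsub1, hnd1⟩ := ih (Γ.tgt f) hw'
      by_cases hu : u ∈ (Γ.tgt f) :: gs'.map Γ.tgt
      · obtain ⟨hs', hw2, hsub2, hsuf⟩ := dropUntil gs' (Γ.tgt f) hw1 hu
        exact ⟨hs', hw2, fun g hg => List.mem_cons_of_mem _ (hsub1 g (hsub2 g hg)),
          hnd1.sublist hsuf.sublist⟩
      · refine ⟨f :: gs', ⟨hE, hsrc, hw1⟩, ?_, ?_⟩
        · intro g hg
          rcases List.mem_cons.1 hg with rfl | hg'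
          · exact List.mem_cons_self
          · exact List.mem_cons_of_mem _ (hsub1 g hg')
        · simp only [List.map_cons]
          exact List.nodup_cons.2 ⟨hu, hnd1⟩

theorem crossing {Γ : MG} {Vh : Finset ℕ} {s t : ℕ} (hr : Γ.Reach s t)
    (hs : s ∈ Vh) (ht : t ∉ Vh) : ∃ e ∈ Γ.E, Γ.src e ∈ Vh ∧ Γ.tgt e ∉ Vh := by
  induction hr using Relation.ReflTransGen.head_induction_on with
  | refl => exact absurd hs ht
  | head hstep _ ih =>
      rename_i a c _
      obtain ⟨e, he, hse, hte⟩ := hstep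
      by_cases hc : c ∈ Vh
      · exact ih hc
      · exact ⟨e, he, hse ▸ hs, hte ▸ hc⟩


theorem exists_notin (s : Finset ℕ) : ∃ n, n ∉ s := by
  refine ⟨s.sup id + 1, fun h => ?_⟩
  have := Finset.le_sup (f := id) h
  simp only [id] at this
  omega

theorem step_lemma (Γ : MG) (b : ℕ) (Vh V1 E1 : Finset ℕ) (a d f : ℕ)
    (hbase : ∀ T x, x ∈ Vh → T ∉ E1 →
      Built b ⟨V1, insert T E1, Function.update Γ.src T x, Function.update Γ.tgt T d⟩)
    (hsub1 : ∀ g ∈ E1, Γ.src g ∈ V1 ∧ Γ.tgt g ∈ V1)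
    (hE1 : E1 ⊆ Γ.E) (haV1 : a ∉ V1)
    (hf : f ∈ Γ.E) (hsf : Γ.src f = a) (htf : Γ.tgt f = d) :
    ∀ T x, x ∈ Vh → T ∉ insert f E1 →
      Built b ⟨insert a V1, insert T (insert f E1),
        Function.update Γ.src T x, Function.update Γ.tgt T a⟩ := by
  intro T x hx hT
  have hTE1 : T ∉ E1 := fun h => hT (Finset.mem_insert_of_mem h)
  have hTf : T ≠ f := fun h => hT (h ▸ Finset.mem_insert_self _ _)
  obtain ⟨S, hS⟩ := exists_notin (insert T Γ.E)
  have hSΓ : S ∉ Γ.E := fun h => hS (Finset.mem_insert_of_mem h)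
  have hS1 : S ∉ E1 := fun h => hSΓ (hE1 h)
  have hST : S ≠ T := fun h => hS (h ▸ Finset.mem_insert_self _ _)
  have hfE1 : f ∉ E1 := fun h => haV1 (hsf ▸ (hsub1 f h).1)
  have herase : (insert S E1).erase S = E1 := Finset.erase_insert hS1
  refine Built.subdiv ⟨V1, insert S E1, Function.update Γ.src S x, Function.update Γ.tgt S d⟩
    _ S a T f (hbase S x hx hS1) (Finset.mem_insert_self _ _) haV1
    (by rw [herase]; exact hTE1) (by rw [herase]; exact hfE1)
    hTf hST.symm (fun h => hSΓ (h ▸ hf)) rfl ?_ ?_ ?_ ?_ ?_ ?_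
  · show insert T (insert f E1) = insert T (insert f ((insert S E1).erase S))
    rw [herase]
  · show Function.update Γ.src T x T = Function.update Γ.src S x S
    rw [Function.update_self, Function.update_self]
  · exact Function.update_self T a Γ.tgt
  · show Function.update Γ.src T x f = a
    rw [Function.update_of_ne (Ne.symm hTf), hsf]
  · show Function.update Γ.tgt T a f = Function.update Γ.tgt S d S
    rw [Function.update_of_ne (Ne.symm hTf), htf, Function.update_self]
  · intro g hg
    rw [herase] at hg
    have hgT : g ≠ T := fun h => hTE1 (h ▸ hg)
    have hgS : g ≠ S := fun h => hS1 (h ▸ hg)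
    constructor
    · show Function.update Γ.src T x g = Function.update Γ.src S x g
      rw [Function.update_of_ne hgT, Function.update_of_ne hgS]
    · show Function.update Γ.tgt T a g = Function.update Γ.tgt S d g
      rw [Function.update_of_ne hgT, Function.update_of_ne hgS]


theorem master (Γ : MG) (b : ℕ) (Vh Eh : Finset ℕ)
    (hbV : b ∈ Vh) (hVh : Vh ⊆ Γ.V) (hEh : Eh ⊆ Γ.E)
    (hsub : ∀ g ∈ Eh, Γ.src g ∈ Vh ∧ Γ.tgt g ∈ Vh)
    (hB : Built b ⟨Vh, Eh, Γ.src, Γ.tgt⟩) (hwf : Γ.WellFormed) :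
    ∀ (fs : List ℕ) (a : ℕ), Walk Γ a fs b → (a :: fs.map Γ.tgt).Nodup →
      a ∈ Γ.V → a ∉ Vh →
    ∃ V' E' : Finset ℕ, Vh ⊆ V' ∧ V' ⊆ Γ.V ∧ Eh ⊆ E' ∧ E' ⊆ Γ.E ∧
      (∀ g ∈ E', Γ.src g ∈ V' ∧ Γ.tgt g ∈ V') ∧ a ∈ V' ∧
      (∀ z ∈ V', z ∈ Vh ∨ z = a ∨ z ∈ fs.map Γ.tgt) ∧
      (∀ g ∈ E', g ∈ Eh ∨ g ∈ fs) ∧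
      (∀ T x, x ∈ Vh → T ∉ E' →
        Built b ⟨V', insert T E', Function.update Γ.src T x, Function.update Γ.tgt T a⟩) := by
  intro fs
  induction fs with
  | nil =>
      intro a hw _ _ haVh
      exact absurd (hw ▸ hbV) haVh
  | cons f fs' ih =>
      intro a hw hnd haΓ haVh
      obtain ⟨hfE, hsf, hw'⟩ := hw
      simp only [List.map_cons] at hnd
      have hndtail : (Γ.tgt f :: fs'.map Γ.tgt).Nodup := (List.nodup_cons.1 hnd).2
      have hahead : a ∉ Γ.tgt f :: fs'.map Γ.tgt := (List.nodup_cons.1 hnd).1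
      by_cases hd : Γ.tgt f ∈ Vh
      · -- base case: ear of length one closes into Vh
        have hbase : ∀ T x, x ∈ Vh → T ∉ Eh →
            Built b ⟨Vh, insert T Eh,
              Function.update Γ.src T x, Function.update Γ.tgt T (Γ.tgt f)⟩ := by
          intro T x hx hT
          refine Built.addEdge ⟨Vh, Eh, Γ.src, Γ.tgt⟩ _ T hT hB rfl rfl ?_ ?_ ?_
          · show Function.update Γ.src T x T ∈ Vh
            rw [Function.update_self]; exact hx
          · show Function.update Γ.tgt T (Γ.tgt f) T ∈ Vh
            rw [Function.update_self]; exact hd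
          · intro g hg
            have hgT : g ≠ T := fun h => hT (h ▸ hg)
            constructor <;>
              [skip; skip] <;> simp [Function.update_of_ne hgT]
        refine ⟨insert a Vh, insert f Eh, Finset.subset_insert _ _,
          Finset.insert_subset haΓ hVh, Finset.subset_insert _ _,
          Finset.insert_subset hfE hEh, ?_, Finset.mem_insert_self _ _, ?_, ?_, ?_⟩
        · intro g hg
          rcases Finset.mem_insert.1 hg with rfl | hg'
          · exact ⟨hsf ▸ Finset.mem_insert_self _ _,
              Finset.mem_insert_of_mem hd⟩
          · exact ⟨Finset.mem_insert_of_mem (hsub g hg').1,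
              Finset.mem_insert_of_mem (hsub g hg').2⟩
        · intro z hz
          rcases Finset.mem_insert.1 hz with rfl | hz'
          · exact Or.inr (Or.inl rfl)
          · exact Or.inl hz'
        · intro g hg
          rcases Finset.mem_insert.1 hg with rfl | hg'
          · exact Or.inr (List.mem_cons_self)
          · exact Or.inl hg'
        · exact step_lemma Γ b Vh Vh Eh a (Γ.tgt f) f hbase hsub hEh haVh hfE hsf rfl
      · -- recursive case
        obtain ⟨V1, E1, hV1a, hV1b, hE1a, hE1b, hsub1, hdV1, hzb, hgb, hph⟩ :=
          ih (Γ.tgt f) hw' hndtail (hwf f hfE).2 hd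
        have haV1 : a ∉ V1 := by
          intro haV1
          rcases hzb a haV1 with h | h | h
          · exact haVh h
          · exact hahead (h ▸ List.mem_cons_self)
          · exact hahead (List.mem_cons_of_mem _ h)
        refine ⟨insert a V1, insert f E1, hV1a.trans (Finset.subset_insert _ _),
          Finset.insert_subset haΓ hV1b, hE1a.trans (Finset.subset_insert _ _),
          Finset.insert_subset hfE hE1b, ?_, Finset.mem_insert_self _ _, ?_, ?_, ?_⟩
        · intro g hg
          rcases Finset.mem_insert.1 hg with rfl | hg'
          · exact ⟨hsf ▸ Finset.mem_insert_self _ _, Finset.mem_insert_of_mem hdV1⟩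
          · exact ⟨Finset.mem_insert_of_mem (hsub1 g hg').1,
              Finset.mem_insert_of_mem (hsub1 g hg').2⟩
        · intro z hz
          simp only [List.map_cons, List.mem_cons]
          rcases Finset.mem_insert.1 hz with rfl | hz'
          · exact Or.inr (Or.inl rfl)
          · rcases hzb z hz' with h | h | h
            · exact Or.inl h
            · exact Or.inr (Or.inr (Or.inl h))
            · exact Or.inr (Or.inr (Or.inr h))
        · intro g hg
          rcases Finset.mem_insert.1 hg with rfl | hg'
          · exact Or.inr (List.mem_cons_self)
          · rcases hgb g hg' with h | h
            · exact Or.inl h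
            · exact Or.inr (List.mem_cons_of_mem _ h)
        · exact step_lemma Γ b Vh V1 E1 a (Γ.tgt f) f hph hsub1 hE1b haV1 hfE hsf rfl


theorem grow (Γ : MG) (b : ℕ) (hwf : Γ.WellFormed) (hsc : Γ.StronglyConnected)
    (hbΓ : b ∈ Γ.V) :
    ∀ (n : ℕ) (Vh Eh : Finset ℕ), b ∈ Vh → Vh ⊆ Γ.V → Eh ⊆ Γ.E →
      (∀ g ∈ Eh, Γ.src g ∈ Vh ∧ Γ.tgt g ∈ Vh) →
      Built b ⟨Vh, Eh, Γ.src, Γ.tgt⟩ → Γ.E.card ≤ Eh.card + n → Built b Γ := by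
  have eta : ∀ (Vh Eh : Finset ℕ), Vh = Γ.V → Eh = Γ.E →
      Built b ⟨Vh, Eh, Γ.src, Γ.tgt⟩ → Built b Γ := by
    intro Vh Eh h1 h2 hB
    subst h1; subst h2
    exact hB
  have finish : ∀ (Vh Eh : Finset ℕ), b ∈ Vh → Vh ⊆ Γ.V →
      (∀ g ∈ Eh, Γ.src g ∈ Vh ∧ Γ.tgt g ∈ Vh) → Eh = Γ.E →
      Built b ⟨Vh, Eh, Γ.src, Γ.tgt⟩ → Built b Γ := by
    intro Vh Eh hbV hVh hsub hEeq hB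
    refine eta Vh Eh (Finset.Subset.antisymm hVh ?_) hEeq hB
    intro v hv
    by_contra hvV
    obtain ⟨e, heΓ, hse, hte⟩ := crossing (hsc b hbΓ v hv) hbV hvV
    exact hte (hsub e (hEeq ▸ heΓ)).2
  intro n
  induction n with
  | zero =>
      intro Vh Eh hbV hVh hEh hsub hB hcard
      exact finish Vh Eh hbV hVh hsub
        (Finset.eq_of_subset_of_card_le hEh (by omega)) hB
  | succ n ihn =>
      intro Vh Eh hbV hVh hEh hsub hB hcard
      by_cases hfull : Γ.E ⊆ Eh
      · exact finish Vh Eh hbV hVh hsub (Finset.Subset.antisymm hEh hfull) hB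
      · obtain ⟨e0, he0Γ, he0Eh⟩ := Finset.not_subset.1 hfull
        by_cases hVfull : Γ.V ⊆ Vh
        · have hVeq : Vh = Γ.V := Finset.Subset.antisymm hVh hVfull
          have hBnew : Built b ⟨Vh, insert e0 Eh, Γ.src, Γ.tgt⟩ :=
            Built.addEdge ⟨Vh, Eh, Γ.src, Γ.tgt⟩ _ e0 he0Eh hB rfl rfl
              (hVeq ▸ (hwf e0 he0Γ).1) (hVeq ▸ (hwf e0 he0Γ).2) (fun g _ => ⟨rfl, rfl⟩)
          refine ihn Vh (insert e0 Eh) hbV hVh (Finset.insert_subset he0Γ hEh) ?_ hBnew ?_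
          · intro g hg
            rcases Finset.mem_insert.1 hg with rfl | hg'
            · exact ⟨hVeq ▸ (hwf g he0Γ).1, hVeq ▸ (hwf g he0Γ).2⟩
            · exact hsub g hg'
          · rw [Finset.card_insert_of_notMem he0Eh]; omega
        · obtain ⟨u, huΓ, huVh⟩ := Finset.not_subset.1 hVfull
          obtain ⟨e1, he1Γ, hx, hy⟩ := crossing (hsc b hbΓ u huΓ) hbV huVh
          have hy0Γ : Γ.tgt e1 ∈ Γ.V := (hwf e1 he1Γ).2
          obtain ⟨fs0, hfs0⟩ := walk_of_reach (hsc (Γ.tgt e1) hy0Γ b (hVh hbV))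
          obtain ⟨fs, hwk, hfssub, hnd⟩ := shorten fs0 (Γ.tgt e1) hfs0
          obtain ⟨V', E', hV'a, hV'b, hE'a, hE'b, hsub', haV', hzb, hgb, hph⟩ :=
            master Γ b Vh Eh hbV hVh hEh hsub hB hwf fs (Γ.tgt e1) hwk hnd hy0Γ hy
          have he1E' : e1 ∉ E' := by
            intro h
            rcases hgb e1 h with h' | h'
            · exact hy (hsub e1 h').2
            · exact (List.nodup_cons.1 hnd).1 (List.mem_map_of_mem (f := Γ.tgt) h')
          have hBnew := hph e1 (Γ.src e1) hx he1E'
          rw [Function.update_eq_self e1 Γ.src, Function.update_eq_self e1 Γ.tgt] at hBnew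
          refine ihn V' (insert e1 E') (hV'a hbV) hV'b (Finset.insert_subset he1Γ hE'b)
            ?_ hBnew ?_
          · intro g hg
            rcases Finset.mem_insert.1 hg with rfl | hg'
            · exact ⟨hV'a hx, haV'⟩
            · exact hsub' g hg'
          · have hc1 : Eh.card ≤ E'.card := Finset.card_le_card hE'a
            rw [Finset.card_insert_of_notMem he1E']
            omega


theorem red_count (b : ℕ) : ∀ {G : MG} {k : ℕ}, Red b G k → k + G.V.card = G.E.card + 1 := by
  intro G k h
  induction h with
  | refl G hV hE => simp [hV, hE]
  | removal G G' k h hr ih =>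
      obtain ⟨e, he, hV, hE, _, _⟩ := h
      have h1 : G'.E.card + 1 = G.E.card := by rw [hE]; exact Finset.card_erase_add_one he
      have h2 : G'.V.card = G.V.card := by rw [hV]
      omega
  | smooth G G' k h hr ih =>
      obtain ⟨v, hv, _, _, _, ein, hein, eout, heout, htin, hsout, hne, enew, henew,
        hV, hE, _, _, _⟩ := h
      have h2 : G'.V.card + 1 = G.V.card := by rw [hV]; exact Finset.card_erase_add_one hv
      have heo : eout ∈ G.E.erase ein := Finset.mem_erase.2 ⟨fun h => hne h.symm, heout⟩
      have henew2 : enew ∉ (G.E.erase ein).erase eout :=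
        fun h => henew (Finset.mem_of_mem_erase (Finset.mem_of_mem_erase h))
      have h3 : G'.E.card = ((G.E.erase ein).erase eout).card + 1 := by
        rw [hE]; exact Finset.card_insert_of_notMem henew2
      have h4 : ((G.E.erase ein).erase eout).card + 1 = (G.E.erase ein).card :=
        Finset.card_erase_add_one heo
      have h5 : (G.E.erase ein).card + 1 = G.E.card := Finset.card_erase_add_one hein
      omega


/-- Every strongly connected semistable pointed multidigraph with at least two vertices admits
a strong reduction, and every strong reduction of `Γ` removes exactly
`w(Γ) = |E(Γ)| - |V(Γ)|` edges (the vertex count excluding the distinguished vertex `b`). -/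
theorem strong_reduction_exists_and_count (Γ : MG) (b : ℕ)
    (hwf : Γ.WellFormed) (hb : b ∈ Γ.V) (hV : 2 ≤ Γ.V.card)
    (hsemi : ∀ v ∈ Γ.V, v ≠ b →
      1 ≤ Γ.indeg v ∧ 1 ≤ Γ.outdeg v ∧ 3 ≤ Γ.indeg v + Γ.outdeg v)
    (hsc : Γ.StronglyConnected) :
    (∃ k, Red b Γ k) ∧ (∀ k, Red b Γ k → k + Γ.V.card = Γ.E.card + 1) := by
  constructor
  · refine built_red (grow Γ b hwf hsc hb Γ.E.card {b} ∅ (Finset.mem_singleton_self b)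
      (Finset.singleton_subset_iff.2 hb) (Finset.empty_subset _) (by simp) ?_ (by simp))
    exact Built.point _ rfl rfl
  · intro k hk
    exact red_count b hk

end MG
end
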